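/- arXiv:2107.07892 — 5 statements merged into one kernel-verified Lean document; each statement's English description precedes it below -/
import Mathlib

section
/- For any negative real number x, the preimage of x under the quaternionic exponential map consists of the quaternions of the form log|x| + I(2k+1)π where I ranges over all quaternionic imaginary units (I² = -1) and k ranges over all integers; in particular this preimage is an infinite union of 2-spheres and is not discrete. -/
open Quaternion NormedSpace

lemma imunit_re_norm {I : ℍ[ℝ]} (hI : I ^ 2 = -1) : I.re = 0 ∧ ‖I‖ = 1 := by
  have hn : Quaternion.normSq I = 1 := by
    have h := congrArg Quaternion.normSq hI
    rw [map_pow] at h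
    simp only [Quaternion.normSq_neg, map_one] at h
    nlinarith [Quaternion.normSq_nonneg (a := I)]
  have hre : I.re = 0 := by
    have h := congrArg QuaternionAlgebra.re hI
    rw [sq, Quaternion.re_mul] at h
    have hn' := Quaternion.normSq_def' I
    simp only [Quaternion.re_neg, Quaternion.re_one] at h
    nlinarith [h, hn, hn']
  refine ⟨hre, ?_⟩
  have := Quaternion.normSq_eq_norm_mul_self I
  nlinarith [norm_nonneg I]

lemma unit_sq_neg_one {I : ℍ[ℝ]} (hre : I.re = 0) (hnorm : ‖I‖ = 1) : I ^ 2 = -1 := by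
  rw [Quaternion.sq_eq_neg_normSq.mpr hre, Quaternion.normSq_eq_norm_mul_self, hnorm, mul_one,
    Quaternion.coe_one]

lemma exp_of_form (x : ℝ) (hx : x < 0) (I : ℍ[ℝ]) (k : ℤ) (hI : I ^ 2 = -1) :
    NormedSpace.exp (((Real.log |x| : ℝ) : ℍ[ℝ]) + (((2 * (k : ℝ) + 1) * Real.pi) • I)) = (x : ℍ[ℝ]) := by
  obtain ⟨hre, hnorm⟩ := imunit_re_norm hI
  set t : ℝ := (2 * (k : ℝ) + 1) * Real.pi with ht
  set q : ℍ[ℝ] := ((Real.log |x| : ℝ) : ℍ[ℝ]) + t • I with hq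
  have hqre : q.re = Real.log |x| := by
    simp [hq, Quaternion.re_smul, hre]
  have hqim : q.im = t • I := by
    have hIim : I.im = I := by
      conv_rhs => rw [← Quaternion.re_add_im I]
      rw [hre]; simp
    simp [hq, Quaternion.im_smul, hIim]
  have hcos : Real.cos t = -1 := by
    have : t = Real.pi + k * (2 * Real.pi) := by rw [ht]; ring
    rw [this, Real.cos_add_int_mul_two_pi, Real.cos_pi]
  have hsin : Real.sin t = 0 := by
    have : t = Real.pi + k * (2 * Real.pi) := by rw [ht]; ring
    rw [this, Real.sin_add_int_mul_two_pi, Real.sin_pi]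
  have hnq : ‖q.im‖ = |t| := by
    rw [hqim, norm_smul, hnorm, mul_one, Real.norm_eq_abs]
  have hcosa : Real.cos ‖q.im‖ = -1 := by rw [hnq, Real.cos_abs, hcos]
  have hsina : Real.sin ‖q.im‖ = 0 := by
    rw [hnq]
    rcases abs_choice t with h | h <;> rw [h]
    · exact hsin
    · rw [Real.sin_neg, hsin, neg_zero]
  rw [Quaternion.exp_eq, hqre, hcosa, hsina, zero_div, zero_smul, add_zero,
    ← Real.exp_eq_exp_ℝ, Real.exp_log (abs_pos.mpr hx.ne), abs_of_neg hx]
  push_cast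
  rw [← Quaternion.coe_mul_eq_smul, mul_neg_one]
  push_cast
  exact neg_neg _

noncomputable def myI0 : ℍ[ℝ] := ⟨0, 1, 0, 0⟩

/-- For any negative real `x`, the preimage of `x` under the quaternionic exponential
consists exactly of the quaternions `log |x| + ((2k+1)π) • I` with `I` an imaginary unit
and `k` an integer; moreover this preimage is infinite (in particular not a discrete set). -/
theorem quaternion_exp_preimage_neg_real (x : ℝ) (hx : x < 0) :
    {q : ℍ[ℝ] | NormedSpace.exp q = (x : ℍ[ℝ])} =
      {q : ℍ[ℝ] | ∃ (I : ℍ[ℝ]) (k : ℤ), I ^ 2 = -1 ∧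
        q = ((Real.log |x| : ℝ) : ℍ[ℝ]) + (((2 * (k : ℝ) + 1) * Real.pi) • I)} ∧
    {q : ℍ[ℝ] | NormedSpace.exp q = (x : ℍ[ℝ])}.Infinite := by
  have hxabs : (0 : ℝ) < |x| := abs_pos.mpr hx.ne
  have hset : {q : ℍ[ℝ] | NormedSpace.exp q = (x : ℍ[ℝ])} =
      {q : ℍ[ℝ] | ∃ (I : ℍ[ℝ]) (k : ℤ), I ^ 2 = -1 ∧
        q = ((Real.log |x| : ℝ) : ℍ[ℝ]) + (((2 * (k : ℝ) + 1) * Real.pi) • I)} := by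
    ext q
    simp only [Set.mem_setOf_eq]
    constructor
    · intro hq
      -- real part of q
      have hre : Real.exp q.re = |x| := by
        have h1 : ‖NormedSpace.exp q‖ = |x| := by rw [hq, Quaternion.norm_coe, Real.norm_eq_abs]
        rw [Quaternion.norm_exp, ← Real.exp_eq_exp_ℝ, Real.norm_eq_abs,
          abs_of_pos (Real.exp_pos _)] at h1
        exact h1
      have hqre : q.re = Real.log |x| := by
        rw [← Real.log_exp q.re, hre]
      -- cosine equation
      have hcos : Real.cos ‖q.im‖ = -1 := by
        have h2 := congrArg QuaternionAlgebra.re ((Quaternion.exp_eq q).symm.trans hq)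
        simp only [Quaternion.re_smul, Quaternion.re_add, Quaternion.re_coe,
          Quaternion.re_im, smul_eq_mul, mul_zero, add_zero] at h2
        rw [← Real.exp_eq_exp_ℝ, hre] at h2
        have hxne : |x| ≠ 0 := hxabs.ne'
        have : |x| * Real.cos ‖q.im‖ = |x| * -1 := by
          rw [h2, abs_of_neg hx]; ring
        exact mul_left_cancel₀ hxne this
      obtain ⟨k, hk⟩ := Real.cos_eq_neg_one_iff.mp hcos
      have himne : q.im ≠ 0 := by
        intro h0
        rw [h0, norm_zero, Real.cos_zero] at hcos
        norm_num at hcos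
      have hnorm_ne : ‖q.im‖ ≠ 0 := norm_ne_zero_iff.mpr himne
      refine ⟨‖q.im‖⁻¹ • q.im, k, ?_, ?_⟩
      · refine unit_sq_neg_one ?_ ?_
        · simp [Quaternion.re_smul, Quaternion.re_im]
        · rw [norm_smul, Real.norm_eq_abs, abs_inv, abs_norm,
            inv_mul_cancel₀ hnorm_ne]
      · have h3 : (2 * (k : ℝ) + 1) * Real.pi = ‖q.im‖ := by rw [← hk]; ring
        rw [h3, smul_inv_smul₀ hnorm_ne, ← hqre, Quaternion.re_add_im]
    · rintro ⟨I, k, hI, rfl⟩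
      exact exp_of_form x hx I k hI
  refine ⟨hset, ?_⟩
  rw [hset]
  have hi2 : myI0 ^ 2 = -1 := by
    rw [sq]
    ext <;> simp [Quaternion.re_mul, Quaternion.imI_mul, Quaternion.imJ_mul,
      Quaternion.imK_mul] <;> simp [myI0]
  refine Set.infinite_of_injective_forall_mem
    (f := fun k : ℤ => ((Real.log |x| : ℝ) : ℍ[ℝ]) +
      (((2 * (k : ℝ) + 1) * Real.pi) • myI0)) ?_ ?_
  · intro k1 k2 h
    have h' := congrArg QuaternionAlgebra.imI h
    simp only [Quaternion.imI_add, Quaternion.imI_coe, Quaternion.imI_smul, smul_eq_mul,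
      mul_one, zero_add] at h'
    simp only [myI0, mul_one] at h'
    have hπ := Real.pi_ne_zero
    field_simp at h'
    exact_mod_cast (by linarith : (k1 : ℝ) = k2)
  · intro k
    exact ⟨_, k, hi2, rfl⟩
end

section
/- No continuous function ℓ defined on any open neighborhood U ⊂ ℍ∖{0} of a strictly negative real number x₀ can satisfy exp(ℓ(q)) = q for all q ∈ U. (There is no continuous branch of the quaternionic logarithm near a negative real point.) -/
open Quaternion NormedSpace

/-- If `exp p = q`, then the imaginary part of `q` is a real multiple of that of `p`. -/
lemma exp_im_parallel (p q : ℍ[ℝ]) (h : exp p = q) :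
    ∃ c : ℝ, q.im = c • p.im := by
  refine ⟨Real.exp p.re * (Real.sin ‖p.im‖ / ‖p.im‖), ?_⟩
  have := Quaternion.im_exp p
  rw [h] at this
  simpa [Real.exp_eq_exp_ℝ] using this

/-- If `exp p = q` and the `i`-component of `q.im` is nonzero while the others vanish,
then the `j` and `k` components of `p.im` vanish. -/
lemma exp_log_imJK (p q : ℍ[ℝ]) (h : exp p = q)
    (hI : q.imI ≠ 0) (hJ : q.imJ = 0) (hK : q.imK = 0) :
    p.imJ = 0 ∧ p.imK = 0 := by
  obtain ⟨c, hc⟩ := exp_im_parallel p q h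
  have hI' : q.imI = c * p.imI := by
    have := congrArg QuaternionAlgebra.imI hc; simpa using this
  have hJ' : q.imJ = c * p.imJ := by
    have := congrArg QuaternionAlgebra.imJ hc; simpa using this
  have hK' : q.imK = c * p.imK := by
    have := congrArg QuaternionAlgebra.imK hc; simpa using this
  have hc0 : c ≠ 0 := by
    intro h0; rw [h0, zero_mul] at hI'; exact hI hI'
  exact ⟨(mul_eq_zero.mp (hJ'.symm.trans hJ)).resolve_left hc0,
    (mul_eq_zero.mp (hK'.symm.trans hK)).resolve_left hc0⟩

lemma exp_log_imIK (p q : ℍ[ℝ]) (h : exp p = q)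
    (hJ : q.imJ ≠ 0) (hI : q.imI = 0) (hK : q.imK = 0) :
    p.imI = 0 ∧ p.imK = 0 := by
  obtain ⟨c, hc⟩ := exp_im_parallel p q h
  have hI' : q.imI = c * p.imI := by
    have := congrArg QuaternionAlgebra.imI hc; simpa using this
  have hJ' : q.imJ = c * p.imJ := by
    have := congrArg QuaternionAlgebra.imJ hc; simpa using this
  have hK' : q.imK = c * p.imK := by
    have := congrArg QuaternionAlgebra.imK hc; simpa using this
  have hc0 : c ≠ 0 := by
    intro h0; rw [h0, zero_mul] at hJ'; exact hJ hJ'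
  exact ⟨(mul_eq_zero.mp (hI'.symm.trans hI)).resolve_left hc0,
    (mul_eq_zero.mp (hK'.symm.trans hK)).resolve_left hc0⟩

/-- The quaternion `i`. -/
noncomputable def qI : ℍ[ℝ] := ⟨0, 1, 0, 0⟩
/-- The quaternion `j`. -/
noncomputable def qJ : ℍ[ℝ] := ⟨0, 0, 1, 0⟩

/-- No continuous branch of the quaternionic logarithm exists on any open neighborhood
`U ⊆ ℍ \ {0}` of a strictly negative real number. -/
theorem no_continuous_quaternionic_log_near_negative_real
    (x₀ : ℝ) (hx₀ : x₀ < 0) (U : Set ℍ[ℝ]) (hU : IsOpen U)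
    (hmem : ((x₀ : ℍ[ℝ])) ∈ U) (h0 : (0 : ℍ[ℝ]) ∉ U)
    (ℓ : ℍ[ℝ] → ℍ[ℝ]) (hcont : ContinuousOn ℓ U) :
    ¬ (∀ q ∈ U, exp (ℓ q) = q) := by
  intro hlog
  have hci : ContinuousWithinAt ℓ U ((x₀ : ℍ[ℝ])) := hcont _ hmem
  -- a generic path argument: along a path into `x₀` on which a coordinate of `ℓ` vanishes,
  -- that coordinate of `ℓ x₀` vanishes.
  have key : ∀ (v : ℍ[ℝ]) (f : ℍ[ℝ] → ℝ), Continuous f →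
      (∀ s : ℝ, 0 < s → s < Real.pi →
        (((x₀ * Real.cos s : ℝ) : ℍ[ℝ]) + (x₀ * Real.sin s) • v) ∈ U →
        f (ℓ (((x₀ * Real.cos s : ℝ) : ℍ[ℝ]) + (x₀ * Real.sin s) • v)) = 0) →
      f (ℓ ((x₀ : ℍ[ℝ]))) = 0 := by
    intro v f hf hvan
    set γ : ℝ → ℍ[ℝ] := fun s => ((x₀ * Real.cos s : ℝ) : ℍ[ℝ]) + (x₀ * Real.sin s) • v with hγ
    have hγc : Continuous γ :=
      (Quaternion.continuous_coe.comp (continuous_const.mul Real.continuous_cos)).add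
        ((continuous_const.mul Real.continuous_sin).smul continuous_const)
    have hγ0 : γ 0 = ((x₀ : ℍ[ℝ])) := by simp [hγ]
    have hmemU : ∀ᶠ s in nhdsWithin 0 (Set.Ioi (0:ℝ)), γ s ∈ U := by
      have : γ ⁻¹' U ∈ nhds (0:ℝ) :=
        (hU.preimage hγc).mem_nhds (by simpa [hγ0] using hmem)
      exact Filter.Eventually.filter_mono nhdsWithin_le_nhds this
    have htend : Filter.Tendsto (fun s => ℓ (γ s)) (nhdsWithin 0 (Set.Ioi (0:ℝ)))
        (nhds (ℓ ((x₀ : ℍ[ℝ])))) := by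
      apply hci.tendsto.comp
      rw [tendsto_nhdsWithin_iff]
      refine ⟨?_, hmemU⟩
      apply Filter.Tendsto.mono_left _ nhdsWithin_le_nhds
      rw [← hγ0]
      exact hγc.tendsto 0
    have htend2 : Filter.Tendsto (fun s => f (ℓ (γ s))) (nhdsWithin 0 (Set.Ioi (0:ℝ)))
        (nhds (f (ℓ ((x₀ : ℍ[ℝ]))))) := (hf.tendsto _).comp htend
    have hsmall : ∀ᶠ s in nhdsWithin 0 (Set.Ioi (0:ℝ)), s ∈ Set.Ioo (0:ℝ) Real.pi := by
      apply Ioo_mem_nhdsGT_of_mem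
      exact ⟨le_refl 0, Real.pi_pos⟩
    have heq : ∀ᶠ s in nhdsWithin 0 (Set.Ioi (0:ℝ)), f (ℓ (γ s)) = 0 := by
      filter_upwards [hmemU, hsmall] with s hsU hs
      exact hvan s hs.1 hs.2 hsU
    have : Filter.Tendsto (fun _ : ℝ => (0:ℝ)) (nhdsWithin 0 (Set.Ioi (0:ℝ)))
        (nhds (f (ℓ ((x₀ : ℍ[ℝ]))))) := htend2.congr' heq
    exact tendsto_nhds_unique this tendsto_const_nhds
  -- apply along the i-path
  have hJ0 : (ℓ ((x₀ : ℍ[ℝ]))).imJ = 0 := by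
    apply key qI _ Quaternion.continuous_imJ
    intro s hs1 hs2 hsU
    set q : ℍ[ℝ] := ((x₀ * Real.cos s : ℝ) : ℍ[ℝ]) + (x₀ * Real.sin s) • qI with hq
    have hIne : q.imI ≠ 0 := by
      have : q.imI = x₀ * Real.sin s := by simp [hq]; simp [qI]
      rw [this]
      exact mul_ne_zero (ne_of_lt hx₀) (ne_of_gt (Real.sin_pos_of_pos_of_lt_pi hs1 hs2))
    have hJe : q.imJ = 0 := by simp [hq]; simp [qI]
    have hKe : q.imK = 0 := by simp [hq]; simp [qI]
    exact (exp_log_imJK _ _ (hlog q hsU) hIne hJe hKe).1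
  have hK0 : (ℓ ((x₀ : ℍ[ℝ]))).imK = 0 := by
    apply key qI _ Quaternion.continuous_imK
    intro s hs1 hs2 hsU
    set q : ℍ[ℝ] := ((x₀ * Real.cos s : ℝ) : ℍ[ℝ]) + (x₀ * Real.sin s) • qI with hq
    have hIne : q.imI ≠ 0 := by
      have : q.imI = x₀ * Real.sin s := by simp [hq]; simp [qI]
      rw [this]
      exact mul_ne_zero (ne_of_lt hx₀) (ne_of_gt (Real.sin_pos_of_pos_of_lt_pi hs1 hs2))
    have hJe : q.imJ = 0 := by simp [hq]; simp [qI]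
    have hKe : q.imK = 0 := by simp [hq]; simp [qI]
    exact (exp_log_imJK _ _ (hlog q hsU) hIne hJe hKe).2
  have hI0 : (ℓ ((x₀ : ℍ[ℝ]))).imI = 0 := by
    apply key qJ _ Quaternion.continuous_imI
    intro s hs1 hs2 hsU
    set q : ℍ[ℝ] := ((x₀ * Real.cos s : ℝ) : ℍ[ℝ]) + (x₀ * Real.sin s) • qJ with hq
    have hJne : q.imJ ≠ 0 := by
      have : q.imJ = x₀ * Real.sin s := by simp [hq]; simp [qJ]
      rw [this]
      exact mul_ne_zero (ne_of_lt hx₀) (ne_of_gt (Real.sin_pos_of_pos_of_lt_pi hs1 hs2))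
    have hIe : q.imI = 0 := by simp [hq]; simp [qJ]
    have hKe : q.imK = 0 := by simp [hq]; simp [qJ]
    exact (exp_log_imIK _ _ (hlog q hsU) hJne hIe hKe).1
  -- hence ℓ x₀ is real
  have hreal : ℓ ((x₀ : ℍ[ℝ])) = (((ℓ ((x₀ : ℍ[ℝ]))).re : ℝ) : ℍ[ℝ]) := by
    ext <;> simp [hI0, hJ0, hK0]
  have hexp : exp (ℓ ((x₀ : ℍ[ℝ]))) = ((Real.exp ((ℓ ((x₀ : ℍ[ℝ]))).re) : ℝ) : ℍ[ℝ]) := by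
    rw [hreal, Quaternion.exp_coe, Quaternion.re_coe, Real.exp_eq_exp_ℝ]
  have hx : ((x₀ : ℍ[ℝ])) = ((Real.exp ((ℓ ((x₀ : ℍ[ℝ]))).re) : ℝ) : ℍ[ℝ]) := by
    rw [← hexp, hlog _ hmem]
  have : x₀ = Real.exp ((ℓ ((x₀ : ℍ[ℝ]))).re) := Quaternion.coe_injective hx
  linarith [Real.exp_pos ((ℓ ((x₀ : ℍ[ℝ]))).re)]
end

section
/- Let F = (G, H) : D → ℝ_ℂ × ℝ_ℂ be an injective stem map with real components G = G₁+ιG₂, H = H₁+ιH₂ satisfying the intrinsic conditions (G₁, H₁ even in y; G₂, H₂ odd in y). Then the induced slice map f on the symmetrization of D in ℍ, defined by f(x+Iy) = (G₁(x+iy)+I G₂(x+iy), H₁(x+iy)+I H₂(x+iy)) for imaginary units I and y ≥ 0, is injective. -/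
open Quaternion

private lemma unit_prop (I : ℍ[ℝ]) (h : I ^ 2 = -1) :
    I.re = 0 ∧ I.imI ^ 2 + I.imJ ^ 2 + I.imK ^ 2 = 1 := by
  rw [sq] at h
  have h1 := congrArg QuaternionAlgebra.re h
  have h2 := congrArg QuaternionAlgebra.imI h
  have h3 := congrArg QuaternionAlgebra.imJ h
  have h4 := congrArg QuaternionAlgebra.imK h
  simp [Quaternion.re_mul, Quaternion.imI_mul, Quaternion.imJ_mul, Quaternion.imK_mul]
    at h1 h2 h3 h4
  have hre : I.re = 0 := by
    have hx : I.re * (I.re ^ 2 + 1) = 0 := by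
      linear_combination I.re * h1 + (I.imI/2) * h2 + (I.imJ/2) * h3 + (I.imK/2) * h4
    have hp : I.re ^ 2 + 1 > 0 := by positivity
    rcases mul_eq_zero.1 hx with h | h
    · exact h
    · linarith
  refine ⟨hre, ?_⟩
  nlinarith [h1, hre]

private lemma unit_ne_zero (I : ℍ[ℝ]) (h : I ^ 2 = -1) : I ≠ 0 := by
  intro h0
  rw [h0] at h
  simp only [ne_eq, zero_pow, OfNat.ofNat_ne_zero, not_false_eq_true] at h
  exact absurd (congrArg QuaternionAlgebra.re h) (by norm_num)

private lemma slice_eq_aux (I J : ℍ[ℝ]) (hI : I ^ 2 = -1) (hJ : J ^ 2 = -1)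
    (s s' : ℝ) (hs : s ≠ 0) (h1 : s • I = s' • J) :
    (s' = s ∧ J = I) ∨ (s' = -s ∧ J = -I) := by
  obtain ⟨hIre, hIn⟩ := unit_prop I hI
  obtain ⟨hJre, hJn⟩ := unit_prop J hJ
  have e1 : s * I.imI = s' * J.imI := by
    have := congrArg QuaternionAlgebra.imI h1; simpa [Quaternion.imI_smul] using this
  have e2 : s * I.imJ = s' * J.imJ := by
    have := congrArg QuaternionAlgebra.imJ h1; simpa [Quaternion.imJ_smul] using this
  have e3 : s * I.imK = s' * J.imK := by
    have := congrArg QuaternionAlgebra.imK h1; simpa [Quaternion.imK_smul] using this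
  have hsq : (s' - s) * (s' + s) = 0 := by
    linear_combination (-(s*I.imI) - s'*J.imI) * e1 + (-(s*I.imJ) - s'*J.imJ) * e2
      + (-(s*I.imK) - s'*J.imK) * e3 + (s^2) * hIn - (s'^2) * hJn
  rcases mul_eq_zero.1 hsq with h | h
  · have hss : s' = s := by linarith [sub_eq_zero.1 h]
    left
    refine ⟨hss, ?_⟩
    subst hss
    ext
    · rw [hIre, hJre]
    · exact (mul_left_cancel₀ hs e1).symm
    · exact (mul_left_cancel₀ hs e2).symm
    · exact (mul_left_cancel₀ hs e3).symm
  · have hss : s' = -s := by linarith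
    right
    refine ⟨hss, ?_⟩
    subst hss
    ext
    · simp [hIre, hJre]
    · simp only [Quaternion.imI_neg]
      have : s * J.imI = s * (-I.imI) := by linear_combination e1
      exact mul_left_cancel₀ hs this
    · simp only [Quaternion.imJ_neg]
      have : s * J.imJ = s * (-I.imJ) := by linear_combination e2
      exact mul_left_cancel₀ hs this
    · simp only [Quaternion.imK_neg]
      have : s * J.imK = s * (-I.imK) := by linear_combination e3
      exact mul_left_cancel₀ hs this

private lemma cancel_smul (I : ℍ[ℝ]) (hI0 : I ≠ 0) (t t' : ℝ) (h : t • I = t' • I) :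
    t' = t := by
  have h0 : (t - t') • I = 0 := by rw [sub_smul, h, sub_self]
  rcases smul_eq_zero.1 h0 with h | h
  · linarith [h]
  · exact absurd h hI0

private lemma slice_eq (I J : ℍ[ℝ]) (hI : I ^ 2 = -1) (hJ : J ^ 2 = -1)
    (s t s' t' : ℝ) (hst : s ≠ 0 ∨ t ≠ 0)
    (h1 : s • I = s' • J) (h2 : t • I = t' • J) :
    (s' = s ∧ t' = t ∧ J = I) ∨ (s' = -s ∧ t' = -t ∧ J = -I) := by
  have hI0 := unit_ne_zero I hI
  rcases hst with hs | ht
  · rcases slice_eq_aux I J hI hJ s s' hs h1 with ⟨hss, hJI⟩ | ⟨hss, hJI⟩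
    · left
      refine ⟨hss, ?_, hJI⟩
      exact cancel_smul I hI0 t t' (by rw [h2, hJI])
    · right
      refine ⟨hss, ?_, hJI⟩
      have : t • I = (-t') • I := by rw [h2, hJI]; simp
      linarith [cancel_smul I hI0 t (-t') this]
  · rcases slice_eq_aux I J hI hJ t t' ht h2 with ⟨hss, hJI⟩ | ⟨hss, hJI⟩
    · left
      refine ⟨?_, hss, hJI⟩
      exact cancel_smul I hI0 s s' (by rw [h1, hJI])
    · right
      refine ⟨?_, hss, hJI⟩
      have : s • I = (-s') • I := by rw [h1, hJI]; simp
      linarith [cancel_smul I hI0 s (-s') this]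

/-- If `F = (G₁ + ιG₂, H₁ + ιH₂)` is an injective real stem map on a conjugation-symmetric
set `D ⊆ ℂ` satisfying the intrinsic conditions (`G₁, H₁` even and `G₂, H₂` odd in the
imaginary part), then the induced slice map
`f(x + Iy) = (G₁(x+iy) + I G₂(x+iy), H₁(x+iy) + I H₂(x+iy))` on the symmetrization of `D`
in `ℍ` is injective. -/
theorem induced_slice_map_injective
    (D : Set ℂ) (hD : (starRingEnd ℂ) '' D = D)
    (G₁ G₂ H₁ H₂ : ℂ → ℝ)
    (hG₁ : ∀ z ∈ D, G₁ ((starRingEnd ℂ) z) = G₁ z)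
    (hH₁ : ∀ z ∈ D, H₁ ((starRingEnd ℂ) z) = H₁ z)
    (hG₂ : ∀ z ∈ D, G₂ ((starRingEnd ℂ) z) = -G₂ z)
    (hH₂ : ∀ z ∈ D, H₂ ((starRingEnd ℂ) z) = -H₂ z)
    (hinj : Set.InjOn (fun z => ((⟨G₁ z, G₂ z⟩ : ℂ), (⟨H₁ z, H₂ z⟩ : ℂ))) D) :
    ∀ (x y u v : ℝ) (I J : ℍ[ℝ]), I ^ 2 = -1 → J ^ 2 = -1 →
      0 ≤ y → 0 ≤ v → (⟨x, y⟩ : ℂ) ∈ D → (⟨u, v⟩ : ℂ) ∈ D →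
      (((G₁ ⟨x, y⟩ : ℝ) : ℍ[ℝ]) + G₂ ⟨x, y⟩ • I,
        ((H₁ ⟨x, y⟩ : ℝ) : ℍ[ℝ]) + H₂ ⟨x, y⟩ • I) =
      (((G₁ ⟨u, v⟩ : ℝ) : ℍ[ℝ]) + G₂ ⟨u, v⟩ • J,
        ((H₁ ⟨u, v⟩ : ℝ) : ℍ[ℝ]) + H₂ ⟨u, v⟩ • J) →
      ((x : ℍ[ℝ]) + y • I = (u : ℍ[ℝ]) + v • J) := by
  intro x y u v I J hI2 hJ2 hy hv hz hw heq
  have hJ0 := unit_ne_zero J hJ2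
  have hIre := (unit_prop I hI2).1
  have hJre := (unit_prop J hJ2).1
  rw [Prod.mk.injEq] at heq
  obtain ⟨hG, hH⟩ := heq
  have hg : G₁ ⟨x, y⟩ = G₁ ⟨u, v⟩ := by
    have := congrArg QuaternionAlgebra.re hG
    simpa [Quaternion.re_smul, hIre, hJre] using this
  have hh : H₁ ⟨x, y⟩ = H₁ ⟨u, v⟩ := by
    have := congrArg QuaternionAlgebra.re hH
    simpa [Quaternion.re_smul, hIre, hJre] using this
  have hGq : G₂ ⟨x, y⟩ • I = G₂ ⟨u, v⟩ • J := by
    have h' : ((G₁ ⟨x, y⟩ : ℝ) : ℍ[ℝ]) + G₂ ⟨x, y⟩ • I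
        = ((G₁ ⟨x, y⟩ : ℝ) : ℍ[ℝ]) + G₂ ⟨u, v⟩ • J := by rw [hG, hg]
    exact add_left_cancel h'
  have hHq : H₂ ⟨x, y⟩ • I = H₂ ⟨u, v⟩ • J := by
    have h' : ((H₁ ⟨x, y⟩ : ℝ) : ℍ[ℝ]) + H₂ ⟨x, y⟩ • I
        = ((H₁ ⟨x, y⟩ : ℝ) : ℍ[ℝ]) + H₂ ⟨u, v⟩ • J := by rw [hH, hh]
    exact add_left_cancel h'
  have hconj : (starRingEnd ℂ) (⟨x, y⟩ : ℂ) = ⟨x, -y⟩ := by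
    apply Complex.ext <;> simp
  have hcm : (⟨x, -y⟩ : ℂ) ∈ D := by
    rw [← hD]; exact ⟨⟨x, y⟩, hz, hconj⟩
  by_cases hs0 : G₂ ⟨x, y⟩ = 0 ∧ H₂ ⟨x, y⟩ = 0
  · obtain ⟨hs, ht⟩ := hs0
    have hs2 : G₂ ⟨u, v⟩ = 0 := by
      rw [hs, zero_smul] at hGq
      rcases smul_eq_zero.1 hGq.symm with h | h
      · exact h
      · exact absurd h hJ0
    have ht2 : H₂ ⟨u, v⟩ = 0 := by
      rw [ht, zero_smul] at hHq
      rcases smul_eq_zero.1 hHq.symm with h | h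
      · exact h
      · exact absurd h hJ0
    have heqz : (⟨x, y⟩ : ℂ) = ⟨u, v⟩ := by
      apply hinj hz hw
      simp only [Prod.mk.injEq, Complex.mk.injEq]
      exact ⟨⟨hg, by rw [hs, hs2]⟩, hh, by rw [ht, ht2]⟩
    have hy0 : y = 0 := by
      have h2 : (⟨x, -y⟩ : ℂ) = ⟨x, y⟩ := by
        apply hinj hcm hz
        simp only [Prod.mk.injEq, Complex.mk.injEq]
        refine ⟨⟨?_, ?_⟩, ?_, ?_⟩
        · rw [← hconj]; exact hG₁ _ hz
        · rw [← hconj, hG₂ _ hz, hs]; simpa using hs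
        · rw [← hconj]; exact hH₁ _ hz
        · rw [← hconj, hH₂ _ hz, ht]; simpa using ht
      have := (Complex.mk.injEq x (-y) x y).mp h2
      linarith [this.2]
    obtain ⟨hxu, hyv⟩ := (Complex.mk.injEq x y u v).mp heqz
    rw [hxu, ← hyv, hy0]
    simp
  · have hst : G₂ ⟨x, y⟩ ≠ 0 ∨ H₂ ⟨x, y⟩ ≠ 0 := not_and_or.mp hs0
    rcases slice_eq I J hI2 hJ2 _ _ _ _ hst hGq hHq with
      ⟨hga, hha, hJI⟩ | ⟨hga, hha, hJI⟩
    · have heqz : (⟨x, y⟩ : ℂ) = ⟨u, v⟩ := by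
        apply hinj hz hw
        simp only [Prod.mk.injEq, Complex.mk.injEq]
        exact ⟨⟨hg, hga.symm⟩, hh, hha.symm⟩
      obtain ⟨hxu, hyv⟩ := (Complex.mk.injEq x y u v).mp heqz
      rw [hxu, hyv, hJI]
    · have heqz : (⟨u, v⟩ : ℂ) = ⟨x, -y⟩ := by
        apply hinj hw hcm
        simp only [Prod.mk.injEq, Complex.mk.injEq]
        refine ⟨⟨?_, ?_⟩, ?_, ?_⟩
        · rw [← hconj, hG₁ _ hz]; exact hg.symm
        · rw [← hconj, hG₂ _ hz]; exact hga
        · rw [← hconj, hH₁ _ hz]; exact hh.symm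
        · rw [← hconj, hH₂ _ hz]; exact hha
      obtain ⟨hux, hvy⟩ := (Complex.mk.injEq u v x (-y)).mp heqz
      have hy0 : y = 0 := by linarith
      have hv0 : v = 0 := by linarith
      rw [hy0, hv0, hux]
      simp
end

section
/- At a point x + Iy with y ≠ 0, the differential of the quaternionic helicoidal map f(x+Iy) = (sinh x cos y + I sinh x sin y, Iy) restricted to the slice ℂ_I = span{1, I} is conformal: the two column vectors df(x+Iy)·1 = (cosh x cos y + I cosh x sin y, 0) and df(x+Iy)·I = (-sinh x sin y + I sinh x cos y, I) are orthogonal in ℝ⁷ and have equal Euclidean norms. -/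
open Quaternion
open scoped RealInnerProductSpace

/-- At a point `x + Iy` with `y ≠ 0`, the differential of the quaternionic helicoidal map
restricted to the slice `ℂ_I` is conformal: the columns
`df·1 = (cosh x cos y + I cosh x sin y, 0)` and `df·I = (-sinh x sin y + I sinh x cos y, I)`
are orthogonal in `ℝ⁷ ≅ ℍ × Im(ℍ)` and have equal squared norm `cosh² x`. -/
theorem helicoidal_slice_differential_conformal
    (I : ℍ[ℝ]) (hI : I ^ 2 = -1) (x y : ℝ) (hy : y ≠ 0) :
    let u : WithLp 2 (ℍ[ℝ] × ℍ[ℝ]) := (WithLp.equiv 2 (ℍ[ℝ] × ℍ[ℝ])).symm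
      (((Real.cosh x * Real.cos y : ℝ) : ℍ[ℝ]) + (Real.cosh x * Real.sin y) • I, 0)
    let w : WithLp 2 (ℍ[ℝ] × ℍ[ℝ]) := (WithLp.equiv 2 (ℍ[ℝ] × ℍ[ℝ])).symm
      (((-(Real.sinh x * Real.sin y) : ℝ) : ℍ[ℝ]) + (Real.sinh x * Real.cos y) • I, I)
    ⟪u, w⟫ = 0 ∧ ⟪u, u⟫ = ⟪w, w⟫ ∧ ⟪u, u⟫ = Real.cosh x ^ 2 := by
  intro u w
  obtain ⟨hre, hnorm⟩ : I.re = 0 ∧ I.imI ^ 2 + I.imJ ^ 2 + I.imK ^ 2 = 1 := by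
    rw [sq, Quaternion.ext_iff] at hI
    simp [Quaternion.re_mul, Quaternion.imI_mul, Quaternion.imJ_mul,
      Quaternion.imK_mul] at hI
    obtain ⟨a, b, c, d⟩ := I
    obtain ⟨h1, h2, h3, h4⟩ := hI
    have ha : a = 0 := by nlinarith [sq_nonneg a, sq_nonneg b, sq_nonneg c, sq_nonneg d]
    subst ha
    refine ⟨rfl, by nlinarith⟩
  have hsc := Real.sin_sq_add_cos_sq y
  have hch := Real.cosh_sq x
  simp only [u, w, WithLp.prod_inner_apply, WithLp.equiv_symm_apply, WithLp.ofLp_toLp,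
    Quaternion.inner_def]
  simp only [Quaternion.re_mul, Quaternion.re_add, Quaternion.imI_add, Quaternion.imJ_add,
    Quaternion.imK_add, Quaternion.re_smul, Quaternion.imI_smul, Quaternion.imJ_smul,
    Quaternion.imK_smul, Quaternion.re_coe, Quaternion.imI_coe, Quaternion.imJ_coe,
    Quaternion.imK_coe, Quaternion.re_star, Quaternion.imI_star, Quaternion.imJ_star,
    Quaternion.imK_star, Quaternion.re_zero, Quaternion.imI_zero, Quaternion.imJ_zero,
    Quaternion.imK_zero, hre, smul_eq_mul]
  refine ⟨?_, ?_, ?_⟩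
  · linear_combination (Real.cosh x * Real.sinh x * Real.sin y * Real.cos y) * hnorm
  · linear_combination (Real.cosh x ^ 2 * Real.sin y ^ 2 - Real.sinh x ^ 2 * Real.cos y ^ 2
      - 1) * hnorm + (Real.cos y ^ 2 + Real.sin y ^ 2) * hch + hsc
  · linear_combination Real.cosh x ^ 2 * Real.sin y ^ 2 * hnorm + Real.cosh x ^ 2 * hsc
end

section
/- The quaternionic E-exponential E : ℍ → ℍ × Im(ℍ), E(x+Iy) = (exp x (cos y + I sin y), Iy), is injective, and the map L(q,p) = log|q| + p defined on its image satisfies L ∘ E = id_ℍ and E ∘ L = id on the image; hence E is a bijection onto its image with inverse L. -/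
open Quaternion NormedSpace

/-- The quaternionic `𝓔⁺`-exponential `E(q) = (exp q, Im q)` (i.e.
`E(x+Iy) = (exp x (cos y + I sin y), Iy)`) is injective, and the map
`L(q, p) = log |q| + p` satisfies `L ∘ E = id` on `ℍ` and `E ∘ L = id` on the image of `E`;
hence `E` is a bijection onto its image with inverse `L`. -/
theorem E_exponential_bijective_with_inverse_L :
    let E : ℍ[ℝ] → ℍ[ℝ] × ℍ[ℝ] := fun q => (exp q, (q.im : ℍ[ℝ]))
    let L : ℍ[ℝ] × ℍ[ℝ] → ℍ[ℝ] := fun p => ((Real.log ‖p.1‖ : ℝ) : ℍ[ℝ]) + p.2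
    Function.Injective E ∧ (∀ q : ℍ[ℝ], L (E q) = q) ∧
      (∀ p ∈ Set.range E, E (L p) = p) := by
  intro E L
  have hLE : ∀ q : ℍ[ℝ], L (E q) = q := by
    intro q
    have h : ‖exp q‖ = Real.exp q.re := by
      rw [Quaternion.norm_exp, ← Real.exp_eq_exp_ℝ, Real.norm_eq_abs,
        abs_of_pos (Real.exp_pos _)]
    simp only [L, E, h, Real.log_exp, Quaternion.re_add_im]
  refine ⟨fun a b hab => by rw [← hLE a, ← hLE b, hab], hLE, ?_⟩
  rintro p ⟨q, rfl⟩
  rw [hLE q]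
end
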